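/- Donsker–Varadhan / Gibbs variational principle (Lemma donsker): Let A be a standard Borel space, ν a finite measure on A with 0 < ν(A) < ∞, β > 0, and f : A → ℝ bounded measurable. Then β log ∫_A e^{f(a)/β} ν(da) = max_{P ∈ Δ(A)} ( ∫ f dP + β H(P) ), and the maximum is attained uniquely at the Gibbs measure P* with ν-density dP*/dν(a) = e^{f(a)/β} / ∫_A e^{f/β} dν. -/

import Mathlib

open MeasureTheory Real
open scoped ENNReal

/-- **Donsker–Varadhan / Gibbs variational principle** (Lemma `donsker`).
For a finite nonzero measure `ν` on a standard Borel space `A`, `β > 0`, and bounded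
measurable `f : A → ℝ`,
`β log ∫ e^{f/β} dν = max_{P ∈ Δ(A)} (∫ f dP + β H(P))`, where for `P ≪ ν` with
well-defined entropy, `H(P) = −∫ log (dP/dν) dP` (and `H(P) = −∞` otherwise, in which case
the inequality is vacuous). The maximum is attained uniquely at the Gibbs measure `P*` with
`ν`-density `e^{f/β} / ∫ e^{f/β} dν`. -/
lemma kl_key {A : Type*} [MeasurableSpace A] (P Q : Measure A)
    [IsProbabilityMeasure P] [IsProbabilityMeasure Q] (h : P ≪ Q)
    (hint : Integrable (llr P Q) P) :
    0 ≤ ∫ x, llr P Q x ∂P ∧ (∫ x, llr P Q x ∂P = 0 → P = Q) := by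
  set d : A → ℝ≥0∞ := P.rnDeriv Q with hd
  have hdm : Measurable d := Measure.measurable_rnDeriv P Q
  have hPdQ : Q.withDensity d = P := Measure.withDensity_rnDeriv_eq P Q h
  have hlt : ∀ᵐ x ∂Q, d x < ∞ := Measure.rnDeriv_lt_top P Q
  have hltP : ∀ᵐ x ∂P, d x < ∞ := h.ae_le hlt
  have hpos : ∀ᵐ x ∂P, 0 < d x := Measure.rnDeriv_pos h
  set ρinv : A → ℝ := fun x => ((d x).toReal)⁻¹ with hρ
  have hρinv_meas : Measurable ρinv := (hdm.ennreal_toReal).inv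
  have hρinv_nonneg : ∀ x, 0 ≤ ρinv x := fun x => inv_nonneg.2 ENNReal.toReal_nonneg
  have hlint : ∫⁻ x, ENNReal.ofReal (ρinv x) ∂P ≤ 1 := by
    rw [← hPdQ, lintegral_withDensity_eq_lintegral_mul _ hdm
      (hρinv_meas.ennreal_ofReal)]
    calc ∫⁻ x, (d x * ENNReal.ofReal (ρinv x)) ∂Q ≤ ∫⁻ _, 1 ∂Q := by
          refine lintegral_mono_ae ?_
          filter_upwards [hlt] with x hx
          rcases eq_or_ne (d x) 0 with h0 | h0
          · simp [ρinv, h0]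
          · have h1 : ENNReal.ofReal (ρinv x) = (d x)⁻¹ := by
              rw [hρ]
              rw [ENNReal.ofReal_inv_of_pos (ENNReal.toReal_pos h0 hx.ne),
                ENNReal.ofReal_toReal hx.ne]
            rw [h1, ENNReal.mul_inv_cancel h0 hx.ne]
      _ = 1 := by simp
  have hρint : Integrable ρinv P := by
    refine ⟨hρinv_meas.aestronglyMeasurable, ?_⟩
    rw [hasFiniteIntegral_iff_ofReal (Filter.Eventually.of_forall hρinv_nonneg)]
    exact lt_of_le_of_lt hlint ENNReal.one_lt_top
  have hρint_le : ∫ x, ρinv x ∂P ≤ 1 := by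
    rw [integral_eq_lintegral_of_nonneg_ae (Filter.Eventually.of_forall hρinv_nonneg)
      hρinv_meas.aestronglyMeasurable]
    calc (∫⁻ x, ENNReal.ofReal (ρinv x) ∂P).toReal ≤ (1 : ℝ≥0∞).toReal :=
          ENNReal.toReal_mono (by simp) hlint
      _ = 1 := by simp
  have hptwise : ∀ᵐ x ∂P, 1 - ρinv x ≤ llr P Q x := by
    filter_upwards [hpos, hltP] with x hx0 hxlt
    have ht : 0 < (d x).toReal := ENNReal.toReal_pos hx0.ne' hxlt.ne
    have := Real.log_le_sub_one_of_pos (inv_pos.2 ht)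
    rw [Real.log_inv] at this
    have : 1 - ((d x).toReal)⁻¹ ≤ Real.log (d x).toReal := by linarith
    simpa [llr, ρinv] using this
  have hsubint : Integrable (fun x => 1 - ρinv x) P := (integrable_const 1).sub hρint
  have hge : 1 - ∫ x, ρinv x ∂P ≤ ∫ x, llr P Q x ∂P := by
    have := integral_mono_ae hsubint hint hptwise
    rwa [integral_sub (integrable_const 1) hρint, integral_const, probReal_univ,
      smul_eq_mul, one_mul] at this
  constructor
  · linarith
  · intro h0
    -- g := llr - (1 - ρinv) ≥ 0 a.e., ∫ g ≤ 0 ⇒ g = 0 a.e.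
    have hgint : Integrable (fun x => llr P Q x - (1 - ρinv x)) P := hint.sub hsubint
    have hgnn : 0 ≤ᵐ[P] fun x => llr P Q x - (1 - ρinv x) := by
      filter_upwards [hptwise] with x hx; simpa using hx
    have hgeq : ∫ x, (llr P Q x - (1 - ρinv x)) ∂P = 0 := by
      have hle : ∫ x, (llr P Q x - (1 - ρinv x)) ∂P ≤ 0 := by
        rw [integral_sub hint hsubint, h0, integral_sub (integrable_const 1) hρint,
          integral_const, probReal_univ, smul_eq_mul, one_mul]
        linarith
      have hge0 : 0 ≤ ∫ x, (llr P Q x - (1 - ρinv x)) ∂P := integral_nonneg_of_ae hgnn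
      linarith
    have hae0 : (fun x => llr P Q x - (1 - ρinv x)) =ᵐ[P] 0 :=
      (integral_eq_zero_iff_of_nonneg_ae hgnn hgint).1 hgeq
    have hd1P : ∀ᵐ x ∂P, d x = 1 := by
      filter_upwards [hae0, hpos, hltP] with x hx hx0 hxlt
      have ht : 0 < (d x).toReal := ENNReal.toReal_pos hx0.ne' hxlt.ne
      have heq : Real.log (d x).toReal = 1 - ((d x).toReal)⁻¹ := by
        have : llr P Q x - (1 - ρinv x) = 0 := hx
        simp only [llr, ρinv] at this ⊢
        linarith
      have htr : (d x).toReal = 1 := by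
        by_contra hne
        have hinv_ne : ((d x).toReal)⁻¹ ≠ 1 := by
          simp [inv_eq_one, hne]
        have := Real.log_lt_sub_one_of_pos (inv_pos.2 ht) hinv_ne
        rw [Real.log_inv] at this
        linarith
      rw [← ENNReal.ofReal_toReal hxlt.ne, htr, ENNReal.ofReal_one]
    -- translate to Q-a.e.
    set S : Set A := {x | d x ≠ 1} with hS
    have hSm : MeasurableSet S := (hdm (measurableSet_singleton 1)).compl
    have hPS : P S = 0 := ae_iff.mp hd1P
    have hQS : ∀ᵐ x ∂Q, x ∈ S → d x = 0 := by
      have hz : ∫⁻ x in S, d x ∂Q = 0 := by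
        rw [← withDensity_apply d hSm, hPdQ]; exact hPS
      have hz2 : d =ᵐ[Q.restrict S] 0 := (lintegral_eq_zero_iff hdm).1 hz
      exact (ae_restrict_iff' hSm).1 hz2
    set T : Set A := {x | d x = 0} with hT
    have hTm : MeasurableSet T := hdm (measurableSet_singleton 0)
    have hdind : d =ᵐ[Q] Tᶜ.indicator (fun _ => 1) := by
      filter_upwards [hQS] with x hx
      by_cases h0 : d x = 0
      · simp [Set.indicator, hT, h0]
      · have hx1 : d x = 1 := by
          by_contra hne; exact h0 (hx hne)
        simp [Set.indicator, hT, h0, hx1]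
    have hQTc : Q Tᶜ = 1 := by
      have h1 : ∫⁻ x, d x ∂Q = 1 := by
        rw [hd, Measure.lintegral_rnDeriv h]; simp
      rw [lintegral_congr_ae hdind, lintegral_indicator hTm.compl] at h1
      simpa using h1
    have hQT : Q T = 0 := by
      have hadd := measure_add_measure_compl (μ := Q) hTm
      rw [hQTc, measure_univ] at hadd
      have h2 : (1 : ℝ≥0∞) + Q T = 1 + 0 := by
        rw [add_comm] at hadd; simpa using hadd
      exact (ENNReal.add_right_inj (by simp)).1 h2
    have hd1Q : d =ᵐ[Q] fun _ => 1 := by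
      have hT0 : ∀ᵐ x ∂Q, d x ≠ 0 := by
        rw [ae_iff]; simpa [hT] using hQT
      filter_upwards [hQS, hT0] with x hx hx0
      by_contra hne
      exact hx0 (hx hne)
    calc P = Q.withDensity d := hPdQ.symm
      _ = Q.withDensity 1 := withDensity_congr_ae hd1Q
      _ = Q := withDensity_one

theorem donsker_varadhan
    {A : Type*} [MeasurableSpace A] [StandardBorelSpace A]
    (ν : Measure A) [IsFiniteMeasure ν] (hν : ν Set.univ ≠ 0)
    (β : ℝ) (hβ : 0 < β)
    (f : A → ℝ) (hf : Measurable f) (hfb : ∃ C, ∀ a, |f a| ≤ C) :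
    ∃ Pstar : Measure A,
      Pstar = ν.withDensity (fun a => ENNReal.ofReal
        (Real.exp (f a / β) / ∫ a', Real.exp (f a' / β) ∂ν)) ∧
      IsProbabilityMeasure Pstar ∧
      -- the Gibbs measure attains the value `β log ∫ e^{f/β} dν`
      (∫ a, f a ∂Pstar) + β * (- ∫ a, Real.log ((Pstar.rnDeriv ν a).toReal) ∂Pstar)
        = β * Real.log (∫ a, Real.exp (f a / β) ∂ν) ∧
      -- all other `P ∈ Δ(A)` with `P ≪ ν` and well-defined entropy attain at most this value,
      -- with equality only at the Gibbs measure
      ∀ P : Measure A, IsProbabilityMeasure P → P ≪ ν →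
        Integrable (fun a => Real.log ((P.rnDeriv ν a).toReal)) P →
          ((∫ a, f a ∂P) + β * (- ∫ a, Real.log ((P.rnDeriv ν a).toReal) ∂P)
              ≤ β * Real.log (∫ a, Real.exp (f a / β) ∂ν)) ∧
          ((∫ a, f a ∂P) + β * (- ∫ a, Real.log ((P.rnDeriv ν a).toReal) ∂P)
              = β * Real.log (∫ a, Real.exp (f a / β) ∂ν) → P = Pstar) := by
  obtain ⟨C, hC⟩ := hfb
  have hνz : NeZero ν := ⟨by simp [← Measure.measure_univ_eq_zero] at hν ⊢; exact hν⟩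
  set g : A → ℝ := fun a => f a / β with hg
  have hgm : Measurable g := hf.div_const β
  -- integrability of exp ∘ g w.r.t. ν
  have hexp : Integrable (fun x => Real.exp (g x)) ν := by
    refine ⟨(hgm.exp).aestronglyMeasurable, ?_⟩
    refine HasFiniteIntegral.of_bounded (C := Real.exp (C / β)) ?_
    filter_upwards with a
    rw [Real.norm_eq_abs, abs_of_pos (Real.exp_pos _)]
    refine Real.exp_le_exp.2 ?_
    show f a / β ≤ C / β
    gcongr
    exact le_of_abs_le (hC a)
  -- the Gibbs measure
  set Pstar : Measure A := ν.tilted g with hPstar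
  have hZpos : 0 < ∫ x, Real.exp (g x) ∂ν := integral_exp_pos hexp
  set Z : ℝ := ∫ x, Real.exp (g x) ∂ν with hZ
  have hPprob : IsProbabilityMeasure Pstar := isProbabilityMeasure_tilted hexp
  have hPac : Pstar ≪ ν := tilted_absolutelyContinuous ν g
  have hνP : ν ≪ Pstar := absolutelyContinuous_tilted hexp
  -- llr of Pstar w.r.t. ν
  have hllr : (fun x => Real.log ((Pstar.rnDeriv ν x).toReal)) =ᵐ[Pstar]
      fun x => g x - Real.log Z :=
    hPac.ae_le (log_rnDeriv_tilted_left_self hexp)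
  -- integrability of f and g w.r.t. any probability measure
  have hfint : ∀ (P : Measure A) [IsProbabilityMeasure P], Integrable f P := by
    intro P _
    refine ⟨hf.aestronglyMeasurable, ?_⟩
    exact HasFiniteIntegral.of_bounded (C := C) (Filter.Eventually.of_forall fun a => by
      simpa [Real.norm_eq_abs] using hC a)
  have hgint : ∀ (P : Measure A) [IsProbabilityMeasure P], Integrable g P := by
    intro P _
    exact (hfint P).div_const β
  -- value at a probability measure P in terms of the llr integral
  have hval : ∀ (P : Measure A) [IsProbabilityMeasure P],
      ∫ x, g x ∂P = (∫ x, f x ∂P) / β := fun P _ => integral_div β f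
  -- Gibbs value
  have hgibbs : (∫ a, f a ∂Pstar) + β * (- ∫ a, Real.log ((Pstar.rnDeriv ν a).toReal) ∂Pstar)
      = β * Real.log Z := by
    have h1 : ∫ a, Real.log ((Pstar.rnDeriv ν a).toReal) ∂Pstar
        = ∫ a, (g a - Real.log Z) ∂Pstar := integral_congr_ae hllr
    rw [h1, integral_sub (hgint Pstar) (integrable_const _), integral_const, probReal_univ,
      smul_eq_mul, one_mul, hval Pstar]
    field_simp
    try ring
  refine ⟨Pstar, rfl, hPprob, hgibbs, ?_⟩
  intro P hPprob' hPν hint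
  have hPPs : P ≪ Pstar := hPν.trans hνP
  have hintP : Integrable (llr P ν) P := hint
  have hintPs : Integrable (llr P Pstar) P :=
    integrable_llr_tilted_right hPν (hgint P) hintP hexp
  have hKL := kl_key P Pstar hPPs hintPs
  have hdecomp : ∫ x, llr P Pstar x ∂P = ∫ x, llr P ν x ∂P - ∫ x, g x ∂P + Real.log Z :=
    integral_llr_tilted_right hPν (hgint P) hexp hintP
  have hvalP : (∫ a, f a ∂P) + β * (- ∫ a, Real.log ((P.rnDeriv ν a).toReal) ∂P)
      = β * Real.log Z - β * ∫ x, llr P Pstar x ∂P := by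
    have h2 : ∫ a, Real.log ((P.rnDeriv ν a).toReal) ∂P = ∫ x, llr P ν x ∂P := rfl
    rw [h2, hdecomp, hval P]
    field_simp
    try ring
  constructor
  · rw [hvalP]
    nlinarith [hKL.1]
  · intro heq
    rw [hvalP] at heq
    have hKL0 : ∫ x, llr P Pstar x ∂P = 0 := by nlinarith
    exact hKL.2 hKL0
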